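/- Let T > 0 and let u : ℝ → ℝ be twice continuously differentiable on [0,T] with u(0) = u(T) = u'(0) = u'(T) = 0. Then (∫₀^T |u(t)|² dt)^{1/2} ≤ (T²/(2√2))·(∫₀^T |u''(t)|² dt)^{1/2} and (∫₀^T |u'(t)|² dt)^{1/2} ≤ (T/√2)·(∫₀^T |u''(t)|² dt)^{1/2}. -/

import Mathlib

open Set MeasureTheory Real intervalIntegral


lemma my_int (a b : ℝ) (hab : a ≤ b) (f : ℝ → ℝ) (hf : ContinuousOn f (Icc a b)) :
    IntervalIntegrable f volume a b := by
  have : ContinuousOn f (uIcc a b) := by rwa [uIcc_of_le hab]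
  exact this.intervalIntegrable

/-- Cauchy–Schwarz for interval integrals: (∫ f)² ≤ (b-a) ∫ f². -/
lemma my_cs (a b : ℝ) (hab : a ≤ b) (f : ℝ → ℝ)
    (hf : IntervalIntegrable f volume a b)
    (hf2 : IntervalIntegrable (fun x => f x ^ 2) volume a b) :
    (∫ x in a..b, f x) ^ 2 ≤ (b - a) * ∫ x in a..b, f x ^ 2 := by
  rcases eq_or_lt_of_le hab with rfl | hlt
  · simp
  set I := ∫ x in a..b, f x with hI
  set J := ∫ x in a..b, f x ^ 2 with hJ
  set L := b - a with hL
  have hLpos : 0 < L := by simp [hL]; linarith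
  set c := I / L with hc
  have key : 0 ≤ ∫ x in a..b, (f x - c) ^ 2 :=
    intervalIntegral.integral_nonneg hab (fun x _ => sq_nonneg _)
  have expand : (∫ x in a..b, (f x - c) ^ 2) = J - 2 * c * I + c ^ 2 * L := by
    have : (fun x => (f x - c) ^ 2) = fun x => f x ^ 2 - 2 * c * f x + c ^ 2 := by
      funext x; ring
    rw [this]
    rw [intervalIntegral.integral_add ((hf2.sub ((hf.const_mul (2*c)))))
      intervalIntegrable_const,
      intervalIntegral.integral_sub hf2 (hf.const_mul (2*c)),
      intervalIntegral.integral_const_mul, intervalIntegral.integral_const]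
    ring_nf
    simp [hJ, hI, hL]
    ring
  rw [expand] at key
  have hIc : I = c * L := by rw [hc, div_mul_cancel₀ _ hLpos.ne']
  nlinarith [key, hLpos, sq_nonneg c]

/-- one-endpoint Poincaré: v(0)=0 ⇒ ∫ v² ≤ T²/2 ∫ v'². -/
lemma my_poincare_one (T : ℝ) (hT : 0 < T) (v v' : ℝ → ℝ)
    (hv : ∀ t ∈ Icc (0:ℝ) T, HasDerivAt v (v' t) t)
    (hv' : ContinuousOn v' (Icc 0 T)) (hv0 : v 0 = 0) :
    ∫ x in (0:ℝ)..T, (v x) ^ 2 ≤ T ^ 2 / 2 * ∫ x in (0:ℝ)..T, (v' x) ^ 2 := by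
  set C := ∫ x in (0:ℝ)..T, (v' x) ^ 2 with hC
  have hvC : ContinuousOn v (Icc 0 T) := fun t ht =>
    (hv t ht).continuousAt.continuousWithinAt
  have hv'2C : ContinuousOn (fun x => (v' x) ^ 2) (Icc 0 T) := hv'.pow 2
  have hv'2int : IntervalIntegrable (fun x => (v' x) ^ 2) volume 0 T :=
    my_int 0 T hT.le _ hv'2C
  have hpt : ∀ t ∈ Icc (0:ℝ) T, (v t) ^ 2 ≤ t * C := by
    intro t ht
    have ht0 : (0:ℝ) ≤ t := ht.1
    have htT : t ≤ T := ht.2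
    have hsub : Icc (0:ℝ) t ⊆ Icc 0 T := Icc_subset_Icc le_rfl htT
    have hftc : ∫ x in (0:ℝ)..t, v' x = v t - v 0 := by
      apply intervalIntegral.integral_eq_sub_of_hasDerivAt
      · intro x hx
        exact hv x (hsub (by rwa [uIcc_of_le ht0] at hx))
      · exact my_int 0 t ht0 _ (hv'.mono hsub)
    have hcs : (∫ x in (0:ℝ)..t, v' x) ^ 2 ≤ (t - 0) * ∫ x in (0:ℝ)..t, (v' x) ^ 2 := by
      apply my_cs 0 t ht0
      · exact my_int 0 t ht0 _ (hv'.mono hsub)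
      · exact my_int 0 t ht0 _ ((hv'.mono hsub).pow 2)
    have hmono : (∫ x in (0:ℝ)..t, (v' x) ^ 2) ≤ C := by
      apply intervalIntegral.integral_mono_interval le_rfl ht0 htT
      · filter_upwards with x; exact sq_nonneg _
      · exact hv'2int
    rw [hftc, hv0, sub_zero] at hcs
    calc (v t) ^ 2 ≤ (t - 0) * ∫ x in (0:ℝ)..t, (v' x) ^ 2 := hcs
      _ ≤ t * C := by rw [sub_zero]; exact mul_le_mul_of_nonneg_left hmono ht0
  have hCnn : 0 ≤ C := intervalIntegral.integral_nonneg hT.le (fun x _ => sq_nonneg _)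
  calc (∫ x in (0:ℝ)..T, (v x) ^ 2) ≤ ∫ x in (0:ℝ)..T, x * C := by
        apply intervalIntegral.integral_mono_on hT.le _ _ hpt
        · exact my_int 0 T hT.le _ (hvC.pow 2)
        · exact (intervalIntegrable_id.mul_const C)
    _ = T ^ 2 / 2 * C := by
        rw [intervalIntegral.integral_mul_const, integral_id]; ring

/-- two-endpoint Poincaré: v(0)=v(T)=0 ⇒ ∫ v² ≤ T²/4 ∫ v'². -/
lemma my_poincare_two (T : ℝ) (hT : 0 < T) (v v' : ℝ → ℝ)
    (hv : ∀ t ∈ Icc (0:ℝ) T, HasDerivAt v (v' t) t)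
    (hv' : ContinuousOn v' (Icc 0 T)) (hv0 : v 0 = 0) (hvT : v T = 0) :
    ∫ x in (0:ℝ)..T, (v x) ^ 2 ≤ T ^ 2 / 4 * ∫ x in (0:ℝ)..T, (v' x) ^ 2 := by
  set C := ∫ x in (0:ℝ)..T, (v' x) ^ 2 with hC
  have hCnn : 0 ≤ C := intervalIntegral.integral_nonneg hT.le (fun x _ => sq_nonneg _)
  have hvC : ContinuousOn v (Icc 0 T) := fun t ht =>
    (hv t ht).continuousAt.continuousWithinAt
  have hv'2int : IntervalIntegrable (fun x => (v' x) ^ 2) volume 0 T :=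
    my_int 0 T hT.le _ (hv'.pow 2)
  have hh1 : (0:ℝ) ≤ T / 2 := by linarith
  have hh2 : T / 2 ≤ T := by linarith
  -- pointwise bound on the left half
  have hptL : ∀ t ∈ Icc (0:ℝ) T, (v t) ^ 2 ≤ t * C := by
    intro t ht
    have ht0 : (0:ℝ) ≤ t := ht.1
    have hsub : Icc (0:ℝ) t ⊆ Icc 0 T := Icc_subset_Icc le_rfl ht.2
    have hftc : ∫ x in (0:ℝ)..t, v' x = v t - v 0 := by
      apply intervalIntegral.integral_eq_sub_of_hasDerivAt
      · intro x hx
        exact hv x (hsub (by rwa [uIcc_of_le ht0] at hx))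
      · exact my_int 0 t ht0 _ (hv'.mono hsub)
    have hcs := my_cs 0 t ht0 v' (my_int 0 t ht0 _ (hv'.mono hsub))
      (my_int 0 t ht0 _ ((hv'.mono hsub).pow 2))
    have hmono : (∫ x in (0:ℝ)..t, (v' x) ^ 2) ≤ C := by
      apply intervalIntegral.integral_mono_interval le_rfl ht0 ht.2
      · filter_upwards with x; exact sq_nonneg _
      · exact hv'2int
    rw [hftc, hv0, sub_zero, sub_zero] at hcs
    exact hcs.trans (mul_le_mul_of_nonneg_left hmono ht0)
  -- pointwise bound on the right half
  have hptR : ∀ t ∈ Icc (0:ℝ) T, (v t) ^ 2 ≤ (T - t) * C := by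
    intro t ht
    have htT : t ≤ T := ht.2
    have hsub : Icc t T ⊆ Icc 0 T := Icc_subset_Icc ht.1 le_rfl
    have hftc : ∫ x in t..T, v' x = v T - v t := by
      apply intervalIntegral.integral_eq_sub_of_hasDerivAt
      · intro x hx
        exact hv x (hsub (by rwa [uIcc_of_le htT] at hx))
      · exact my_int t T htT _ (hv'.mono hsub)
    have hcs := my_cs t T htT v' (my_int t T htT _ (hv'.mono hsub))
      (my_int t T htT _ ((hv'.mono hsub).pow 2))
    have hmono : (∫ x in t..T, (v' x) ^ 2) ≤ C := by
      apply intervalIntegral.integral_mono_interval ht.1 htT le_rfl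
      · filter_upwards with x; exact sq_nonneg _
      · exact hv'2int
    rw [hftc, hvT, zero_sub] at hcs
    have : (v t) ^ 2 = (-v t) ^ 2 := by ring
    rw [this]
    exact hcs.trans (mul_le_mul_of_nonneg_left hmono (by linarith))
  have hintL : IntervalIntegrable (fun x => (v x) ^ 2) volume 0 (T/2) :=
    my_int 0 (T/2) hh1 _ ((hvC.pow 2).mono (Icc_subset_Icc le_rfl hh2))
  have hintR : IntervalIntegrable (fun x => (v x) ^ 2) volume (T/2) T :=
    my_int (T/2) T hh2 _ ((hvC.pow 2).mono (Icc_subset_Icc hh1 le_rfl))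
  have hsplit : (∫ x in (0:ℝ)..T, (v x) ^ 2)
      = (∫ x in (0:ℝ)..(T/2), (v x) ^ 2) + ∫ x in (T/2)..T, (v x) ^ 2 :=
    (intervalIntegral.integral_add_adjacent_intervals hintL hintR).symm
  have hL : (∫ x in (0:ℝ)..(T/2), (v x) ^ 2) ≤ T ^ 2 / 8 * C := by
    calc (∫ x in (0:ℝ)..(T/2), (v x) ^ 2) ≤ ∫ x in (0:ℝ)..(T/2), x * C := by
          apply intervalIntegral.integral_mono_on hh1 hintL
            (intervalIntegrable_id.mul_const C)
          intro x hx
          exact hptL x ⟨hx.1, hx.2.trans hh2⟩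
      _ = T ^ 2 / 8 * C := by
          rw [intervalIntegral.integral_mul_const, integral_id]; ring
  have hR : (∫ x in (T/2)..T, (v x) ^ 2) ≤ T ^ 2 / 8 * C := by
    calc (∫ x in (T/2)..T, (v x) ^ 2) ≤ ∫ x in (T/2)..T, (T - x) * C := by
          apply intervalIntegral.integral_mono_on hh2 hintR
            (((_root_.intervalIntegrable_const (c := T)).sub intervalIntegrable_id).mul_const C)
          intro x hx
          exact hptR x ⟨hh1.trans hx.1, hx.2⟩
      _ = T ^ 2 / 8 * C := by
          have : (fun x => (T - x) * C) = fun x => T * C - x * C := by funext x; ring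
          rw [this, intervalIntegral.integral_sub
            ((_root_.intervalIntegrable_const (c := T)).mul_const C)
            (intervalIntegrable_id.mul_const C),
            intervalIntegral.integral_mul_const, intervalIntegral.integral_mul_const,
            integral_id, intervalIntegral.integral_const]
          simp [smul_eq_mul]; ring
  rw [hsplit]
  linarith

theorem stmt8
    (T : ℝ) (hT0 : 0 < T)
    (u u' u'' : ℝ → ℝ)
    (hu : ∀ t ∈ Icc (0:ℝ) T, HasDerivAt u (u' t) t)
    (hu' : ∀ t ∈ Icc (0:ℝ) T, HasDerivAt u' (u'' t) t)
    (hu'' : ContinuousOn u'' (Icc 0 T))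
    (hu0 : u 0 = 0) (huT : u T = 0) (hu'0 : u' 0 = 0) (hu'T : u' T = 0) :
    Real.sqrt (∫ x in (0:ℝ)..T, |u x| ^ 2) ≤
      (T ^ 2 / (2 * Real.sqrt 2)) * Real.sqrt (∫ x in (0:ℝ)..T, |u'' x| ^ 2) ∧
    Real.sqrt (∫ x in (0:ℝ)..T, |u' x| ^ 2) ≤
      (T / Real.sqrt 2) * Real.sqrt (∫ x in (0:ℝ)..T, |u'' x| ^ 2) := by
  simp only [sq_abs]
  have hu'C : ContinuousOn u' (Icc 0 T) := fun t ht =>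
    (hu' t ht).continuousAt.continuousWithinAt
  have h1 : (∫ x in (0:ℝ)..T, (u' x) ^ 2) ≤ T ^ 2 / 2 * ∫ x in (0:ℝ)..T, (u'' x) ^ 2 :=
    my_poincare_one T hT0 u' u'' hu' hu'' hu'0
  have h2 : (∫ x in (0:ℝ)..T, (u x) ^ 2) ≤ T ^ 2 / 4 * ∫ x in (0:ℝ)..T, (u' x) ^ 2 :=
    my_poincare_two T hT0 u u' hu hu'C hu0 huT
  set X := ∫ x in (0:ℝ)..T, (u'' x) ^ 2 with hX
  have hXnn : 0 ≤ X := intervalIntegral.integral_nonneg hT0.le (fun x _ => sq_nonneg _)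
  have hs2 : Real.sqrt 2 > 0 := Real.sqrt_pos.mpr (by norm_num)
  constructor
  · have hb : (∫ x in (0:ℝ)..T, (u x) ^ 2) ≤ (T ^ 2 / (2 * Real.sqrt 2)) ^ 2 * X := by
      have : (T ^ 2 / (2 * Real.sqrt 2)) ^ 2 = T ^ 4 / 8 := by
        rw [div_pow, mul_pow, Real.sq_sqrt (by norm_num : (0:ℝ) ≤ 2)]; ring
      rw [this]
      calc (∫ x in (0:ℝ)..T, (u x) ^ 2) ≤ T ^ 2 / 4 * ∫ x in (0:ℝ)..T, (u' x) ^ 2 := h2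
        _ ≤ T ^ 2 / 4 * (T ^ 2 / 2 * X) :=
            mul_le_mul_of_nonneg_left h1 (by positivity)
        _ = T ^ 4 / 8 * X := by ring
    calc Real.sqrt (∫ x in (0:ℝ)..T, (u x) ^ 2)
        ≤ Real.sqrt ((T ^ 2 / (2 * Real.sqrt 2)) ^ 2 * X) := Real.sqrt_le_sqrt hb
      _ = (T ^ 2 / (2 * Real.sqrt 2)) * Real.sqrt X := by
          rw [Real.sqrt_mul (by positivity), Real.sqrt_sq (by positivity)]
  · have hb : (∫ x in (0:ℝ)..T, (u' x) ^ 2) ≤ (T / Real.sqrt 2) ^ 2 * X := by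
      have : (T / Real.sqrt 2) ^ 2 = T ^ 2 / 2 := by
        rw [div_pow, Real.sq_sqrt (by norm_num : (0:ℝ) ≤ 2)]
      rw [this]; exact h1
    calc Real.sqrt (∫ x in (0:ℝ)..T, (u' x) ^ 2)
        ≤ Real.sqrt ((T / Real.sqrt 2) ^ 2 * X) := Real.sqrt_le_sqrt hb
      _ = (T / Real.sqrt 2) * Real.sqrt X := by
          rw [Real.sqrt_mul (by positivity), Real.sqrt_sq (by positivity)]
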